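/- If a labeled graph G = ({1,…,n}, E) is 12-representable, then it is 12-representable by a word in which every letter occurs at most twice. -/

import Mathlib

/-- A word has no 12-match iff no two consecutive letters form a strictly
increasing pair, i.e. the word is weakly decreasing at each step. -/
def NoMatch12 (w : List ℕ) : Prop := w.Chain' (fun a b => b ≤ a)

/-- `w` 12-represents the labeled graph with vertex set `V ⊂ ℕ` and edge relation
`E`: every vertex occurs in `w`, all letters of `w` are vertices, and for all
distinct vertices `x, y`: `xy` is an edge iff the subsequence of `w` consisting of
occurrences of `x` and `y` has no 12-match. -/
def Rep12 (V : Finset ℕ) (E : ℕ → ℕ → Prop) (w : List ℕ) : Prop :=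
  (∀ v ∈ V, v ∈ w) ∧ (∀ a ∈ w, a ∈ V) ∧
    ∀ x ∈ V, ∀ y ∈ V, x ≠ y →
      (E x y ↔ NoMatch12 (w.filter (fun a => a = x ∨ a = y)))

namespace Stmt4Aux

open List

/-- index of the first occurrence of `v` in `w` -/
def fIdx (w : List ℕ) (v : ℕ) : ℕ := w.idxOf v

/-- index of the last occurrence of `v` in `w` -/
def gIdx (w : List ℕ) (v : ℕ) : ℕ := w.length - 1 - w.reverse.idxOf v

lemma fIdx_lt {w : List ℕ} {v : ℕ} (hv : v ∈ w) : fIdx w v < w.length :=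
  idxOf_lt_length_of_mem hv

lemma getElem_fIdx {w : List ℕ} {v : ℕ} (hv : v ∈ w) :
    w[fIdx w v]'(fIdx_lt hv) = v := getElem_idxOf _

lemma gIdx_lt {w : List ℕ} {v : ℕ} (hv : v ∈ w) : gIdx w v < w.length := by
  have : 0 < w.length := length_pos_iff.2 (ne_nil_of_mem hv)
  unfold gIdx; omega

lemma getElem_gIdx {w : List ℕ} {v : ℕ} (hv : v ∈ w) :
    w[gIdx w v]'(gIdx_lt hv) = v := by
  have hv' : v ∈ w.reverse := mem_reverse.2 hv
  have h1 : w.reverse.idxOf v < w.reverse.length := idxOf_lt_length_of_mem hv'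
  have h2 : w.reverse[w.reverse.idxOf v]'h1 = v := getElem_idxOf _
  rw [getElem_reverse] at h2
  have : w.length - 1 - w.reverse.idxOf v = gIdx w v := rfl
  simp only [length_reverse] at h2 h1
  convert h2 using 2
  exact this.symm

/-- minimality of the first-occurrence index -/
lemma fIdx_le {w : List ℕ} {v : ℕ} {i : ℕ} (hi : i < w.length) (hv : w[i] = v) :
    fIdx w v ≤ i := by
  have hmem : v ∈ w.take (i + 1) := by
    have hlen : i < (w.take (i + 1)).length := by simp [length_take]; omega
    have : (w.take (i + 1))[i]'hlen = w[i] := getElem_take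
    rw [hv] at this
    exact this ▸ getElem_mem hlen
  have hsplit : w = w.take (i + 1) ++ w.drop (i + 1) := (take_append_drop _ _).symm
  have : fIdx w v = w.idxOf v := rfl
  rw [this, hsplit, idxOf_append_of_mem hmem]
  have h4 : List.idxOf v (w.take (i + 1)) < (w.take (i + 1)).length :=
    idxOf_lt_length_of_mem hmem
  have h5 : (w.take (i + 1)).length ≤ i + 1 := by simp [length_take]
  omega

/-- maximality of the last-occurrence index -/
lemma le_gIdx {w : List ℕ} {v : ℕ} {i : ℕ} (hi : i < w.length) (hv : w[i] = v) :
    i ≤ gIdx w v := by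
  have hrl : w.length - 1 - i < w.reverse.length := by simp [length_reverse]; omega
  have h2 : w.reverse[w.length - 1 - i]'hrl = v := by
    rw [getElem_reverse]
    have : w.length - 1 - (w.length - 1 - i) = i := by omega
    simp_rw [this]; exact hv
  have h3 : w.reverse.idxOf v ≤ w.length - 1 - i := by
    have := fIdx_le hrl h2
    simpa [fIdx] using this
  unfold gIdx; omega

lemma fIdx_le_gIdx {w : List ℕ} {v : ℕ} (hv : v ∈ w) : fIdx w v ≤ gIdx w v :=
  le_gIdx (fIdx_lt hv) (getElem_fIdx hv)

/-- a two-element subsequence obtained from two positions -/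
lemma pair_sublist (w : List ℕ) {i j : ℕ} (hij : i < j) (hj : j < w.length) :
    [w[i]'(lt_trans hij hj), w[j]] <+ w := by
  have hi : i < w.length := lt_trans hij hj
  have hdj : j - (i + 1) < (w.drop (i + 1)).length := by simp [length_drop]; omega
  have hmem : w[j] ∈ w.drop (i + 1) := by
    have : (w.drop (i + 1))[j - (i + 1)]'hdj = w[(i + 1) + (j - (i + 1))] := getElem_drop
    have heq : (i + 1) + (j - (i + 1)) = j := by omega
    simp_rw [heq] at this
    exact this ▸ getElem_mem hdj
  have h1 : [w[i], w[j]] <+ w[i] :: w.drop (i + 1) :=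
    (singleton_sublist.2 hmem).cons₂ _
  have h2 : w[i] :: w.drop (i + 1) = w.drop i := (drop_eq_getElem_cons hi).symm
  rw [h2] at h1
  exact h1.trans (drop_sublist i w)

/-- the key characterization: `[a, b]` is a subsequence of `w` iff the first
occurrence of `a` precedes the last occurrence of `b`. -/
lemma sublist_iff_lt {w : List ℕ} {a b : ℕ} (ha : a ∈ w) (hb : b ∈ w) :
    [a, b] <+ w ↔ fIdx w a < gIdx w b := by
  constructor
  · intro hsub
    rw [cons_sublist_iff] at hsub
    obtain ⟨r₁, r₂, hw, ha1, hb2⟩ := hsub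
    have hb2' : b ∈ r₂ := singleton_sublist.1 hb2
    have h1 : fIdx w a < r₁.length := by
      have : fIdx w a = w.idxOf a := rfl
      rw [this, hw, idxOf_append_of_mem ha1]
      exact idxOf_lt_length_of_mem ha1
    obtain ⟨j, hj, hbj⟩ := getElem_of_mem hb2'
    have hjlen : r₁.length + j < w.length := by rw [hw]; simp [length_append]; omega
    have hwj : w[r₁.length + j]'hjlen = b := by
      subst hw
      rw [getElem_append_right (by omega)]
      simpa using hbj
    have := le_gIdx hjlen hwj
    omega
  · intro hlt
    have h1 : [w[fIdx w a]'(fIdx_lt ha), w[gIdx w b]'(gIdx_lt hb)] <+ w :=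
      pair_sublist w hlt (gIdx_lt hb)
    rwa [getElem_fIdx ha, getElem_gIdx hb] at h1

/-- `NoMatch12` of the `{x,y}`-restriction, as a subsequence condition on `u`. -/
lemma noMatch_iff {x y : ℕ} (hxy : x ≠ y) (u : List ℕ) :
    NoMatch12 (u.filter (fun a => a = x ∨ a = y)) ↔
      ¬ ([min x y, max x y] <+ u) := by
  set l := min x y with hl
  set m := max x y with hm
  have hlm : l < m := min_lt_max.2 hxy
  have hset : ∀ a : ℕ, (a = x ∨ a = y) ↔ (a = l ∨ a = m) := by
    intro a
    rcases le_total x y with h | h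
    · rw [hl, hm, min_eq_left h, max_eq_right h]
    · rw [hl, hm, min_eq_right h, max_eq_left h]; tauto
  have hfeq : u.filter (fun a => a = x ∨ a = y) = u.filter (fun a => a = l ∨ a = m) := by
    apply filter_congr
    intro a _
    simp only [decide_eq_decide]
    exact hset a
  rw [hfeq]
  set v := u.filter (fun a => decide (a = l ∨ a = m)) with hv
  have hvsub : v <+ u := filter_sublist
  have hvmem : ∀ a ∈ v, a = l ∨ a = m := by
    intro a hav
    have := (mem_filter.1 hav).2
    simpa using this
  have htrans : Trans (fun a b : ℕ => b ≤ a) (fun a b : ℕ => b ≤ a) (fun a b : ℕ => b ≤ a) :=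
    ⟨fun h1 h2 => le_trans h2 h1⟩
  rw [NoMatch12]
  show IsChain (fun a b : ℕ => b ≤ a) v ↔ _
  rw [isChain_iff_pairwise]
  constructor
  · intro hp hsub
    have hlv : [l, m] <+ v := by
      have h2 := hsub.filter (fun a => decide (a = l ∨ a = m))
      have h3 : [l, m].filter (fun a => decide (a = l ∨ a = m)) = [l, m] := by
        simp
      rwa [h3] at h2
    have := hp.sublist hlv
    simp at this
    omega
  · intro hns
    by_contra hnp
    rw [pairwise_iff_getElem] at hnp
    push_neg at hnp
    obtain ⟨i, j, hi, hj, hij, hnle⟩ := hnp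
    have hlt2 : v[i] < v[j] := hnle
    have hvi := hvmem _ (getElem_mem hi)
    have hvj := hvmem _ (getElem_mem hj)
    have hvi' : v[i] = l := by rcases hvi with h | h; exact h; rcases hvj with h' | h' <;> omega
    have hvj' : v[j] = m := by rcases hvj with h | h; rcases hvi with h' | h' <;> omega; exact h
    apply hns
    have := pair_sublist v hij hj
    rw [hvi', hvj'] at this
    exact this.trans hvsub

/-- two members of a pairwise list, in forced order, form a subsequence -/
lemma sublist_pair_of_mem {α : Type*} {R : α → α → Prop} {s : List α}
    (hs : List.Pairwise R s) {p q : α} (hp : p ∈ s) (hq : q ∈ s)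
    (hnot : ¬ R q p) (hne : p ≠ q) : [p, q] <+ s := by
  obtain ⟨s1, s2, rfl⟩ := append_of_mem hp
  rcases (by simpa using hq : q ∈ s1 ∨ q = p ∨ q ∈ s2) with h | h | h
  · exact absurd ((pairwise_append.1 hs).2.2 q h p mem_cons_self) hnot
  · exact absurd h.symm hne
  · exact (((singleton_sublist.2 h).cons₂ p).trans (sublist_append_right s1 _))

/-- the events: first- and last-occurrence (index, letter) pairs -/
def events (w : List ℕ) (L : List ℕ) : List (ℕ × ℕ) :=
  L.flatMap (fun v => [(fIdx w v, v), (gIdx w v, v)])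

def sortedEvents (w : List ℕ) (L : List ℕ) : List (ℕ × ℕ) :=
  (events w L).mergeSort (fun p q => decide (p.1 ≤ q.1))

/-- the word in which every letter occurs (at most) twice -/
def goodWord (w : List ℕ) (L : List ℕ) : List ℕ :=
  (sortedEvents w L).map Prod.snd

lemma perm_sortedEvents (w L : List ℕ) : sortedEvents w L ~ events w L :=
  mergeSort_perm _ _

lemma pairwise_sortedEvents (w L : List ℕ) :
    List.Pairwise (fun p q : ℕ × ℕ => p.1 ≤ q.1) (sortedEvents w L) := by
  have htr : ∀ (a b c : ℕ × ℕ), decide (a.1 ≤ b.1) = true → decide (b.1 ≤ c.1) = true →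
      decide (a.1 ≤ c.1) = true := by intro a b c h1 h2; simp at *; omega
  have hto : ∀ (a b : ℕ × ℕ), (decide (a.1 ≤ b.1) || decide (b.1 ≤ a.1)) = true := by
    intro a b; simp; omega
  have := List.pairwise_mergeSort htr hto (events w L)
  simpa [sortedEvents] using this

lemma events_mem_cases {w L : List ℕ} {p : ℕ × ℕ} (hp : p ∈ events w L) :
    p.2 ∈ L ∧ (p.1 = fIdx w p.2 ∨ p.1 = gIdx w p.2) := by
  simp only [events, mem_flatMap, mem_cons, not_mem_nil, or_false] at hp
  obtain ⟨v, hv, h | h⟩ := hp <;> subst h <;> exact ⟨hv, by simp⟩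

lemma f_mem_events {w L : List ℕ} {v : ℕ} (hv : v ∈ L) : (fIdx w v, v) ∈ events w L := by
  simp only [events, mem_flatMap]; exact ⟨v, hv, by simp⟩

lemma g_mem_events {w L : List ℕ} {v : ℕ} (hv : v ∈ L) : (gIdx w v, v) ∈ events w L := by
  simp only [events, mem_flatMap]; exact ⟨v, hv, by simp⟩

lemma goodWord_sublist_iff {w L : List ℕ} (hL : ∀ v ∈ L, v ∈ w) {a b : ℕ}
    (ha : a ∈ L) (hb : b ∈ L) (hab : a ≠ b) :
    [a, b] <+ goodWord w L ↔ fIdx w a < gIdx w b := by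
  have haw : a ∈ w := hL a ha
  have hbw : b ∈ w := hL b hb
  constructor
  · intro hsub
    rw [goodWord, sublist_map_iff] at hsub
    obtain ⟨l', hl', heq⟩ := hsub
    rcases l' with _ | ⟨p, _ | ⟨q, _ | ⟨r, t⟩⟩⟩ <;> simp at heq
    obtain ⟨hpa, hqb⟩ := heq
    have hRpq : p.1 ≤ q.1 := by
      have := (pairwise_sortedEvents w L).sublist hl'
      simpa using this
    obtain ⟨hpL, hpc⟩ := events_mem_cases
      ((perm_sortedEvents w L).subset (hl'.subset (by simp : p ∈ [p, q])))
    obtain ⟨hqL, hqc⟩ := events_mem_cases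
      ((perm_sortedEvents w L).subset (hl'.subset (by simp : q ∈ [p, q])))
    rw [← hpa] at hpc
    rw [← hqb] at hqc
    have hpo : w[p.1]? = some a := by
      rcases hpc with hc | hc <;> rw [hc]
      · rw [getElem?_eq_getElem (fIdx_lt haw), getElem_fIdx haw]
      · rw [getElem?_eq_getElem (gIdx_lt haw), getElem_gIdx haw]
    have hqo : w[q.1]? = some b := by
      rcases hqc with hc | hc <;> rw [hc]
      · rw [getElem?_eq_getElem (fIdx_lt hbw), getElem_fIdx hbw]
      · rw [getElem?_eq_getElem (gIdx_lt hbw), getElem_gIdx hbw]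
    have hne1 : p.1 ≠ q.1 := by
      intro e
      have h3 : some a = some b := by rw [← hpo, e]; exact hqo
      exact hab (by injection h3)
    have h1 : fIdx w a ≤ p.1 := by
      have := fIdx_le_gIdx haw; rcases hpc with hc | hc <;> omega
    have h2 : q.1 ≤ gIdx w b := by
      have := fIdx_le_gIdx hbw; rcases hqc with hc | hc <;> omega
    omega
  · intro hlt
    have hp : (fIdx w a, a) ∈ sortedEvents w L :=
      (perm_sortedEvents w L).mem_iff.2 (f_mem_events ha)
    have hq : (gIdx w b, b) ∈ sortedEvents w L :=
      (perm_sortedEvents w L).mem_iff.2 (g_mem_events hb)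
    have hsub : [(fIdx w a, a), (gIdx w b, b)] <+ sortedEvents w L := by
      refine sublist_pair_of_mem (pairwise_sortedEvents w L) hp hq ?_ ?_
      · simp; omega
      · intro hcontra
        exact hab (by simpa using congrArg Prod.snd hcontra)
    have := hsub.map Prod.snd
    simpa [goodWord] using this

lemma count_flatMap_pair (L : List ℕ) (a : ℕ) :
    (L.flatMap (fun v => [v, v])).count a = 2 * L.count a := by
  induction L with
  | nil => simp
  | cons v t ih =>
    simp only [flatMap_cons, count_append, ih, count_cons, count_nil]
    by_cases h : v = a <;> simp [h] <;> omega

lemma count_goodWord (w L : List ℕ) (a : ℕ) :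
    (goodWord w L).count a = 2 * L.count a := by
  have h1 : goodWord w L ~ (events w L).map Prod.snd :=
    (perm_sortedEvents w L).map Prod.snd
  rw [h1.count_eq]
  have h2 : (events w L).map Prod.snd = L.flatMap (fun v => [v, v]) := by
    simp [events, map_flatMap]
  rw [h2, count_flatMap_pair]

lemma mem_goodWord_iff (w L : List ℕ) (a : ℕ) : a ∈ goodWord w L ↔ a ∈ L := by
  rw [← count_pos_iff, ← count_pos_iff (l := L), count_goodWord]
  omega

end Stmt4Aux

open Stmt4Aux List in
/-- a 12-representable labeled graph is 12-representable by a word in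
which every letter occurs at most twice. -/
theorem stmt_4 (n : ℕ) (E : ℕ → ℕ → Prop)
    (h : ∃ w, Rep12 (Finset.Icc 1 n) E w) :
    ∃ w, Rep12 (Finset.Icc 1 n) E w ∧ ∀ a : ℕ, w.count a ≤ 2 := by
  obtain ⟨w, hcov, hsub, hedge⟩ := h
  set V := Finset.Icc 1 n with hV
  set L := V.toList with hL
  have hLmem : ∀ v : ℕ, v ∈ L ↔ v ∈ V := fun v => Finset.mem_toList
  have hLw : ∀ v ∈ L, v ∈ w := fun v hv => hcov v ((hLmem v).1 hv)
  refine ⟨goodWord w L, ⟨?_, ?_, ?_⟩, ?_⟩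
  · intro v hv
    exact (mem_goodWord_iff w L v).2 ((hLmem v).2 hv)
  · intro a ha
    exact (hLmem a).1 ((mem_goodWord_iff w L a).1 ha)
  · intro x hx y hy hxy
    have hminL : min x y ∈ L := by
      rcases min_choice x y with h | h <;> rw [h]
      · exact (hLmem _).2 hx
      · exact (hLmem _).2 hy
    have hmaxL : max x y ∈ L := by
      rcases max_choice x y with h | h <;> rw [h]
      · exact (hLmem _).2 hx
      · exact (hLmem _).2 hy
    rw [hedge x hx y hy hxy, noMatch_iff hxy w, noMatch_iff hxy (goodWord w L),
      sublist_iff_lt (hLw _ hminL) (hLw _ hmaxL),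
      goodWord_sublist_iff hLw hminL hmaxL (ne_of_lt (min_lt_max.2 hxy))]
  · intro a
    rw [count_goodWord]
    have := (List.nodup_iff_count_le_one.1 (Finset.nodup_toList V)) a
    rw [← hL] at this
    omega
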